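/- Consider a convex polygon evolving under constant normal speeds of its supporting lines. The polygon degenerates in finite time if and only if either (1) there exist two edges with antiparallel normals whose supporting-line distance vanishes in finite time, or (2) there exist three edges whose supporting lines form a triangle that degenerates (its area tends to 0) in finite time. -/

import Mathlib

open RealInnerProductSpace

open Filter


lemma perp_eq_or_neg (v a b : EuclideanSpace ℝ (Fin 2)) (hv : v ≠ 0)
    (ha : ‖a‖ = 1) (hb : ‖b‖ = 1) (h1 : ⟪v, a⟫ = 0) (h2 : ⟪v, b⟫ = 0) :
    b = a ∨ b = -a := by
  have hinner : ∀ x y : EuclideanSpace ℝ (Fin 2), ⟪x, y⟫ = x 0 * y 0 + x 1 * y 1 := by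
    intro x y; simp [PiLp.inner_apply, Fin.sum_univ_two, RCLike.inner_apply, mul_comm]
  have ha' : a 0 * a 0 + a 1 * a 1 = 1 := by
    have := real_inner_self_eq_norm_mul_norm a
    rw [ha, hinner] at this; linarith
  have hb' : b 0 * b 0 + b 1 * b 1 = 1 := by
    have := real_inner_self_eq_norm_mul_norm b
    rw [hb, hinner] at this; linarith
  rw [hinner] at h1 h2
  have hv' : v 0 ≠ 0 ∨ v 1 ≠ 0 := by
    by_contra hc
    push_neg at hc
    exact hv (by ext i; fin_cases i <;> simp [hc.1, hc.2])
  have hdet : a 0 * b 1 - a 1 * b 0 = 0 := by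
    rcases hv' with h | h
    · have h3 : v 0 * (a 0 * b 1 - a 1 * b 0) = 0 := by linear_combination b 1 * h1 - a 1 * h2
      rcases mul_eq_zero.1 h3 with h' | h'
      · exact absurd h' h
      · exact h'
    · have h3 : v 1 * (a 0 * b 1 - a 1 * b 0) = 0 := by linear_combination a 0 * h2 - b 0 * h1
      rcases mul_eq_zero.1 h3 with h' | h'
      · exact absurd h' h
      · exact h'
  have hc2 : (a 0 * b 0 + a 1 * b 1 - 1) * (a 0 * b 0 + a 1 * b 1 + 1) = 0 := by
    nlinarith [hdet, ha', hb']
  rcases mul_eq_zero.1 hc2 with h | h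
  · left
    have h0 : b 0 = a 0 ∧ b 1 = a 1 := by
      constructor <;> nlinarith [sq_nonneg (a 0 - b 0), sq_nonneg (a 1 - b 1), ha', hb', h]
    ext i; fin_cases i
    · exact h0.1
    · exact h0.2
  · right
    have h0 : b 0 = -a 0 ∧ b 1 = -a 1 := by
      constructor <;> nlinarith [sq_nonneg (a 0 + b 0), sq_nonneg (a 1 + b 1), ha', hb', h]
    ext i; fin_cases i <;> simp [h0.1, h0.2]


-- helper: a point in the interior of a set contained in a half-space satisfies the strict inequality
lemma interior_strict' {S : Set (EuclideanSpace ℝ (Fin 2))} {m : EuclideanSpace ℝ (Fin 2)}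
    (hm : ‖m‖ = 1) {a : ℝ} (hS : S ⊆ {y | ⟪y, m⟫ ≤ a}) {x : EuclideanSpace ℝ (Fin 2)}
    (hx : x ∈ interior S) : ⟪x, m⟫ < a := by
  obtain ⟨ε, hε, hball⟩ := Metric.isOpen_iff.1 isOpen_interior x hx
  have hy : x + (ε/2) • m ∈ S := by
    apply interior_subset
    apply hball
    rw [Metric.mem_ball, dist_eq_norm]
    simp [norm_smul, abs_of_pos hε, hm]
    linarith
  have := hS hy
  simp only [Set.mem_setOf_eq, inner_add_left, real_inner_smul_left] at this
  rw [real_inner_self_eq_norm_mul_norm, hm] at this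
  nlinarith

lemma cone_lemma' {ι : Type*} [Fintype ι] (n : ι → EuclideanSpace ℝ (Fin 2)) (b : ι → ℝ)
    (hn : ∀ i, ‖n i‖ = 1) (v : EuclideanSpace ℝ (Fin 2)) (hv : v ≠ 0)
    (hvK : ∀ i, ⟪v, n i⟫ ≤ 0) (hpair : ∀ i j, n j = -n i → 0 < b i + b j) :
    ∃ x, ∀ i, ⟪x, n i⟫ < b i := by
  classical
  -- find w and μ such that each constraint is either strictly decreasing along v
  -- or constant and already satisfied
  obtain ⟨w, μ, key⟩ : ∃ (w : EuclideanSpace ℝ (Fin 2)) (μ : ℝ), ∀ i,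
      ⟪v, n i⟫ < 0 ∨ (⟪v, n i⟫ = 0 ∧ μ * ⟪w, n i⟫ < b i) := by
    by_cases hE : ∃ i₀, ⟪v, n i₀⟫ = 0
    case neg =>
      refine ⟨0, 0, fun i => Or.inl ?_⟩
      exact lt_of_le_of_ne (hvK i) (fun h => hE ⟨i, h⟩)
    obtain ⟨i₀, h0⟩ := hE
    set w := n i₀ with hw
    have hww : ⟪w, w⟫ = 1 := by
      rw [real_inner_self_eq_norm_mul_norm, hn i₀]; ring
    set P : Finset ι := Finset.univ.filter (fun j => n j = w) with hP
    set M : Finset ι := Finset.univ.filter (fun j => n j = -w) with hM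
    have hPmem : ∀ j, j ∈ P ↔ n j = w := by intro j; simp [hP]
    have hMmem : ∀ j, j ∈ M ↔ n j = -w := by intro j; simp [hM]
    have hPne : P.Nonempty := ⟨i₀, (hPmem i₀).2 rfl⟩
    have hcross : ∀ j ∈ P, ∀ k ∈ M, -b k < b j := by
      intro j hj k hk
      have h1 := (hPmem j).1 hj
      have h2 := (hMmem k).1 hk
      have : n k = -n j := by rw [h1, h2]
      linarith [hpair j k this]
    set A := P.inf' hPne b with hA
    have hμex : ∃ μ : ℝ, (∀ j ∈ P, μ < b j) ∧ (∀ k ∈ M, -b k < μ) := by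
      by_cases hMne : M.Nonempty
      · set B := M.sup' hMne (fun k => -b k) with hB
        have hBA : B < A := by
          rw [hB, hA, Finset.sup'_lt_iff, ]
          intro k hk
          rw [Finset.lt_inf'_iff]
          intro j hj
          exact hcross j hj k hk
        refine ⟨(A + B)/2, fun j hj => ?_, fun k hk => ?_⟩
        · have : A ≤ b j := Finset.inf'_le _ hj
          linarith
        · have : -b k ≤ B := Finset.le_sup' (fun k => -b k) hk
          linarith
      · refine ⟨A - 1, fun j hj => ?_, fun k hk => absurd ⟨k, hk⟩ hMne⟩
        have : A ≤ b j := Finset.inf'_le _ hj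
        linarith
    obtain ⟨μ, hμP, hμM⟩ := hμex
    refine ⟨w, μ, fun i => ?_⟩
    by_cases hi : ⟪v, n i⟫ = 0
    · right
      refine ⟨hi, ?_⟩
      rcases perp_eq_or_neg v w (n i) hv (hn i₀) (hn i) h0 hi with h | h
      · have hiP : i ∈ P := (hPmem i).2 h
        rw [h, hww, mul_one]
        exact hμP i hiP
      · have hiM : i ∈ M := (hMmem i).2 h
        rw [h, inner_neg_right, hww, mul_neg_one]
        linarith [hμM i hiM]
    · exact Or.inl (lt_of_le_of_ne (hvK i) hi)
  -- now take x = μ • w + t • v for t large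
  have hev : ∀ i, ∀ᶠ t : ℝ in atTop, ⟪μ • w + t • v, n i⟫ < b i := by
    intro i
    have hval : ∀ t : ℝ, ⟪μ • w + t • v, n i⟫ = μ * ⟪w, n i⟫ + t * ⟪v, n i⟫ := by
      intro t; rw [inner_add_left, real_inner_smul_left, real_inner_smul_left]
    rcases key i with h | ⟨h1, h2⟩
    · filter_upwards [eventually_gt_atTop ((b i - μ * ⟪w, n i⟫) / ⟪v, n i⟫)] with t ht
      rw [hval]
      have := mul_lt_mul_of_neg_right ht h
      rw [div_mul_cancel₀ _ (ne_of_lt h)] at this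
      linarith
    · filter_upwards with t
      rw [hval, h1, mul_zero, add_zero]
      exact h2
  obtain ⟨t, ht⟩ := (Filter.eventually_all.2 hev).exists
  exact ⟨μ • w + t • v, ht⟩


/-- Degeneration criterion for an evolving convex polygon: the polygon degenerates in
finite time iff either two edges with antiparallel normals have supporting-line
distance vanishing in finite time, or three edges whose supporting lines form a
triangle have that triangle degenerating in finite time. -/
theorem polygon_degeneration_criterion
    {ι : Type*} [Fintype ι]
    (n : ι → EuclideanSpace ℝ (Fin 2)) (c s : ι → ℝ)
    (hunit : ∀ i, ‖n i‖ = 1)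
    -- at time 0 we have a genuine convex polygon
    (hpoly : (interior (⋂ i, {x : EuclideanSpace ℝ (Fin 2) |
        ⟪x, n i⟫ ≤ c i + s i * 0})).Nonempty) :
    (∃ t : ℝ, 0 ≤ t ∧
        interior (⋂ i, {x : EuclideanSpace ℝ (Fin 2) | ⟪x, n i⟫ ≤ c i + s i * t}) = ∅) ↔
      ((∃ e₁ e₂ : ι, n e₂ = -n e₁ ∧
          ∃ t : ℝ, 0 ≤ t ∧ (c e₁ + s e₁ * t) + (c e₂ + s e₂ * t) = 0) ∨
       (∃ e₁ e₂ e₃ : ι,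
          -- the three supporting lines bound a triangle
          {v : EuclideanSpace ℝ (Fin 2) |
              ⟪v, n e₁⟫ ≤ 0 ∧ ⟪v, n e₂⟫ ≤ 0 ∧ ⟪v, n e₃⟫ ≤ 0} = {0} ∧
          -- and that triangle degenerates (loses its interior) in finite time
          ∃ t : ℝ, 0 ≤ t ∧
            interior {x : EuclideanSpace ℝ (Fin 2) |
                ⟪x, n e₁⟫ ≤ c e₁ + s e₁ * t ∧ ⟪x, n e₂⟫ ≤ c e₂ + s e₂ * t ∧
                ⟪x, n e₃⟫ ≤ c e₃ + s e₃ * t} = ∅)) := by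
  classical
  set a : ι → ℝ → ℝ := fun i t => c i + s i * t with ha
  constructor
  · rintro ⟨T, hT0, hT⟩
    -- the intersection of the open half-planes at time T is empty
    have hOempty : (⋂ i, {x : EuclideanSpace ℝ (Fin 2) | ⟪x, n i⟫ < a i T}) = ∅ := by
      rw [← Set.subset_empty_iff, ← hT]
      apply interior_maximal
      · exact Set.iInter_mono fun i => Set.setOf_subset_setOf.2 fun x => le_of_lt
      · exact isOpen_iInter_of_finite fun i =>
          isOpen_lt (continuous_id.inner continuous_const) continuous_const
    -- Helly: find three indices whose open half-planes already have empty intersection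
    have hlin : ∀ i : ι, IsLinearMap ℝ (fun x : EuclideanSpace ℝ (Fin 2) => ⟪x, n i⟫) :=
      fun i => ⟨fun x y => inner_add_left x y _, fun r x => real_inner_smul_left x _ r⟩
    have hhelly := mt (Convex.helly_theorem' (𝕜 := ℝ) (s := Finset.univ)
      (F := fun i => {x : EuclideanSpace ℝ (Fin 2) | ⟪x, n i⟫ < a i T})
      (fun i _ => convex_halfSpace_lt (hlin i) _))
    have hne : ¬ (⋂ i ∈ (Finset.univ : Finset ι),
        {x : EuclideanSpace ℝ (Fin 2) | ⟪x, n i⟫ < a i T}).Nonempty := by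
      rintro ⟨x, hx⟩
      rw [Set.mem_iInter₂] at hx
      have hx' : x ∈ ⋂ i, {x : EuclideanSpace ℝ (Fin 2) | ⟪x, n i⟫ < a i T} :=
        Set.mem_iInter.2 fun i => hx i (Finset.mem_univ i)
      rw [hOempty] at hx'
      exact hx'
    have := hhelly hne
    push_neg at this
    obtain ⟨I, -, hIcard, hIempty⟩ := this
    rw [finrank_euclideanSpace_fin] at hIcard
    -- extract three (not necessarily distinct) indices covering I
    have hIne : I.Nonempty := by
      rcases Finset.eq_empty_or_nonempty I with h | h
      · exfalso
        rw [h] at hIempty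
        simp only [Finset.notMem_empty, Set.iInter_of_empty, Set.iInter_univ] at hIempty
        exact (Set.univ_nonempty).ne_empty hIempty
      · exact h
    obtain ⟨e₁, e₂, e₃, hcover⟩ : ∃ e₁ e₂ e₃ : ι, ∀ i ∈ I, i = e₁ ∨ i = e₂ ∨ i = e₃ := by
      have h3 : I.card = 1 ∨ I.card = 2 ∨ I.card = 3 := by
        have h1 : 1 ≤ I.card := Finset.card_pos.2 hIne
        omega
      rcases h3 with h | h | h
      · obtain ⟨x, hx⟩ := Finset.card_eq_one.1 h
        exact ⟨x, x, x, fun i hi => by rw [hx] at hi; simp at hi; tauto⟩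
      · obtain ⟨x, y, -, hx⟩ := Finset.card_eq_two.1 h
        exact ⟨x, y, y, fun i hi => by rw [hx] at hi; simp at hi; tauto⟩
      · obtain ⟨x, y, z, -, -, -, hx⟩ := Finset.card_eq_three.1 h
        exact ⟨x, y, z, fun i hi => by rw [hx] at hi; simp at hi; tauto⟩
    -- triple of open half-planes with empty intersection
    have htriple : ∀ x : EuclideanSpace ℝ (Fin 2),
        ¬(⟪x, n e₁⟫ < a e₁ T ∧ ⟪x, n e₂⟫ < a e₂ T ∧ ⟪x, n e₃⟫ < a e₃ T) := by
      rintro x ⟨h1, h2, h3⟩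
      have : x ∈ ⋂ i ∈ I, {x : EuclideanSpace ℝ (Fin 2) | ⟪x, n i⟫ < a i T} := by
        rw [Set.mem_iInter₂]
        intro i hi
        rcases hcover i hi with rfl | rfl | rfl <;> assumption
      rw [hIempty] at this
      exact this
    by_cases hanti : ∃ i j : ι, n j = -n i ∧ a i T + a j T ≤ 0
    · -- antiparallel pair: slab collapses, use IVT to get the exact time
      left
      obtain ⟨i, j, hij, hsum⟩ := hanti
      refine ⟨i, j, hij, ?_⟩
      obtain ⟨x0, hx0⟩ := hpoly
      have hi0 : ⟪x0, n i⟫ < a i 0 :=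
        interior_strict' (hunit i) (Set.iInter_subset _ i) hx0
      have hj0 : ⟪x0, n j⟫ < a j 0 :=
        interior_strict' (hunit j) (Set.iInter_subset _ j) hx0
      rw [hij, inner_neg_right] at hj0
      have hg0 : 0 < a i 0 + a j 0 := by linarith
      set g : ℝ → ℝ := fun t => (c i + s i * t) + (c j + s j * t) with hg
      have hcont : ContinuousOn g (Set.Icc 0 T) := by
        exact ((continuous_const.add (continuous_const.mul continuous_id)).add
          (continuous_const.add (continuous_const.mul continuous_id))).continuousOn
      have hmem : (0:ℝ) ∈ Set.Icc (g T) (g 0) := by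
        constructor
        · simpa [hg, ha] using hsum
        · simpa [hg, ha] using le_of_lt hg0
      obtain ⟨t, ht, hgt⟩ := intermediate_value_Icc' hT0 hcont hmem
      exact ⟨t, ht.1, hgt⟩
    · -- no antiparallel collapse: the triple forms a triangle which degenerates
      push_neg at hanti
      right
      refine ⟨e₁, e₂, e₃, ?_, T, hT0, ?_⟩
      · -- the cone is {0}
        ext v
        simp only [Set.mem_setOf_eq, Set.mem_singleton_iff]
        constructor
        · rintro ⟨h1, h2, h3⟩
          by_contra hv
          set n' : Fin 3 → EuclideanSpace ℝ (Fin 2) := ![n e₁, n e₂, n e₃] with hn'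
          set b' : Fin 3 → ℝ := ![a e₁ T, a e₂ T, a e₃ T] with hb'
          have hx := cone_lemma' n' b'
            (by intro i; fin_cases i
                · exact hunit e₁
                · exact hunit e₂
                · exact hunit e₃) v hv
            (by intro i; fin_cases i
                · exact h1
                · exact h2
                · exact h3)
            (by
              intro i j hij
              fin_cases i <;> fin_cases j
              · exact hanti e₁ e₁ hij
              · exact hanti e₁ e₂ hij
              · exact hanti e₁ e₃ hij
              · exact hanti e₂ e₁ hij
              · exact hanti e₂ e₂ hij
              · exact hanti e₂ e₃ hij
              · exact hanti e₃ e₁ hij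
              · exact hanti e₃ e₂ hij
              · exact hanti e₃ e₃ hij)
          obtain ⟨x, hx⟩ := hx
          exact htriple x ⟨hx 0, hx 1, hx 2⟩
        · rintro rfl
          simp
      · -- the triangle has empty interior at time T
        rw [Set.eq_empty_iff_forall_notMem]
        intro x hx
        have hsub1 : {x : EuclideanSpace ℝ (Fin 2) |
            ⟪x, n e₁⟫ ≤ a e₁ T ∧ ⟪x, n e₂⟫ ≤ a e₂ T ∧ ⟪x, n e₃⟫ ≤ a e₃ T} ⊆
            {y | ⟪y, n e₁⟫ ≤ a e₁ T} := fun y hy => hy.1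
        have hsub2 : {x : EuclideanSpace ℝ (Fin 2) |
            ⟪x, n e₁⟫ ≤ a e₁ T ∧ ⟪x, n e₂⟫ ≤ a e₂ T ∧ ⟪x, n e₃⟫ ≤ a e₃ T} ⊆
            {y | ⟪y, n e₂⟫ ≤ a e₂ T} := fun y hy => hy.2.1
        have hsub3 : {x : EuclideanSpace ℝ (Fin 2) |
            ⟪x, n e₁⟫ ≤ a e₁ T ∧ ⟪x, n e₂⟫ ≤ a e₂ T ∧ ⟪x, n e₃⟫ ≤ a e₃ T} ⊆
            {y | ⟪y, n e₃⟫ ≤ a e₃ T} := fun y hy => hy.2.2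
        exact htriple x ⟨interior_strict' (hunit e₁) hsub1 hx,
          interior_strict' (hunit e₂) hsub2 hx, interior_strict' (hunit e₃) hsub3 hx⟩
  · rintro (⟨e₁, e₂, hanti, t, ht0, hsum⟩ | ⟨e₁, e₂, e₃, -, t, ht0, htri⟩)
    · refine ⟨t, ht0, ?_⟩
      rw [Set.eq_empty_iff_forall_notMem]
      intro x hx
      have h1 : ⟪x, n e₁⟫ < a e₁ t :=
        interior_strict' (hunit e₁) (Set.iInter_subset _ e₁) hx
      have h2 : ⟪x, n e₂⟫ < a e₂ t :=
        interior_strict' (hunit e₂) (Set.iInter_subset _ e₂) hx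
      rw [hanti, inner_neg_right] at h2
      simp only [ha] at h1 h2
      linarith
    · refine ⟨t, ht0, ?_⟩
      rw [Set.eq_empty_iff_forall_notMem]
      intro x hx
      rw [Set.eq_empty_iff_forall_notMem] at htri
      apply htri x
      apply interior_mono ?_ hx
      intro y hy
      rw [Set.mem_iInter] at hy
      exact ⟨hy e₁, hy e₂, hy e₃⟩
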